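/- arXiv:1206.6688 — 5 statements merged into one kernel-verified Lean document; each statement's English description precedes it below -/
import Mathlib

section
/- Under the Misiurewicz assumption, |λ0| > 1/e. -/
open Function

/-- `Df f k z = ∏_{j=1}^k f^j(z)`, the derivative of the k-th iterate of
`f(z) = λ·exp z` at `z`. -/
noncomputable def Df (f : ℂ → ℂ) (k : ℕ) (z : ℂ) : ℂ :=
  ∏ j ∈ Finset.range k, f^[j + 1] z

/-- The post-singular set of `f`: the closure of the forward orbit of `0`. -/
def postSing (f : ℂ → ℂ) : Set ℂ :=
  closure (Set.range fun n => f^[n] (0 : ℂ))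

/-- under the Misiurewicz assumption, `|λ0| > 1/e`. -/
theorem stmt_0 (lam : ℂ) (hlam : lam ≠ 0) (f : ℂ → ℂ)
    (hf : ∀ z, f z = lam * Complex.exp z)
    (hPbdd : Bornology.IsBounded (postSing f))
    (n0 : ℕ) (hn0 : 1 ≤ n0) (α : ℝ) (hα : 0 < α)
    (hrep : ∀ z ∈ postSing f, Real.exp α < ‖Df f n0 z‖) :
    1 / Real.exp 1 < ‖lam‖ := by
  by_contra hcon
  push_neg at hcon
  have key : ∀ n, ‖f^[n] 0‖ ≤ 1 := by
    intro n
    induction n with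
    | zero => simp
    | succ n ih =>
      rw [Function.iterate_succ_apply', hf, norm_mul, Complex.norm_exp]
      have h1 : Real.exp (f^[n] 0).re ≤ Real.exp 1 :=
        Real.exp_le_exp.mpr (le_trans (Complex.re_le_norm _) ih)
      have h2 : ‖lam‖ * Real.exp (f^[n] 0).re ≤
          (1 / Real.exp 1) * Real.exp 1 :=
        mul_le_mul hcon h1 (Real.exp_pos _).le (by positivity)
      have h3 : (1 / Real.exp 1) * Real.exp 1 = 1 := by
        field_simp
      linarith
  have h0 : (0 : ℂ) ∈ postSing f := subset_closure ⟨0, by simp⟩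
  have hbig := hrep 0 h0
  have hsmall : ‖Df f n0 0‖ ≤ 1 := by
    unfold Df
    rw [norm_prod]
    exact Finset.prod_le_one (fun j _ => (norm_nonneg _)) (fun j _ => key (j + 1))
  have : (1 : ℝ) < Real.exp α := by simpa using Real.exp_lt_exp.mpr hα
  linarith
end

section
/- Under the Misiurewicz assumption, for every δ > 0 there exists β > 0 such that for every z ∈ ℂ and every integer k ≥ 0, if the distance from f^k(z) to P(f) is greater than δ, then |Df^k(z)| > β. -/
open Function Metric

lemma exists_primitive {c : ℂ} {r : ℝ} {h : ℂ → ℂ}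
    (hd : DifferentiableOn ℂ h (ball c r)) :
    ∃ F : ℂ → ℂ, ∀ u ∈ ball c r, HasDerivAt F (h u) u := by
  set co : ℕ → ℂ := fun n => (n.factorial : ℂ)⁻¹ * iteratedDeriv n h c with hco
  have hsum : ∀ z ∈ ball c r, HasSum (fun n => co n * (z - c) ^ n) (h z) := by
    intro z hz
    have H := Complex.hasSum_taylorSeries_on_ball hd hz
    have e : (fun n => co n * (z - c) ^ n) = fun n => ((n.factorial : ℂ))⁻¹ • (z - c) ^ n • iteratedDeriv n h c := by
      funext n
      simp only [hco, smul_eq_mul]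
      ring
    rw [e]; exact H
  refine ⟨fun u => ∑' n, co n / (n + 1) * (u - c) ^ (n + 1), ?_⟩
  intro u hu
  obtain ⟨s, hus, hsr⟩ := exists_between (mem_ball.1 hu)
  have hs0 : 0 < s := lt_of_le_of_lt dist_nonneg hus
  obtain ⟨s', hss', hs'r⟩ := exists_between hsr
  have hs'0 : 0 < s' := hs0.trans hss'
  have hz' : c + (s' : ℂ) ∈ ball c r := by
    rw [mem_ball, dist_eq_norm, add_sub_cancel_left, Complex.norm_real, Real.norm_eq_abs,
      abs_of_pos hs'0]
    exact hs'r
  have hsum' : Summable (fun n => co n * (s' : ℂ) ^ n) := by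
    have := (hsum _ hz').summable
    simpa using this
  have htend := hsum'.tendsto_atTop_zero
  have hbdd : BddAbove (Set.range fun n => ‖co n * (s' : ℂ) ^ n‖) :=
    (htend.norm.bddAbove_range)
  obtain ⟨C, hC⟩ := hbdd
  have hCn : ∀ n, ‖co n‖ * s' ^ n ≤ C := by
    intro n
    have := hC (Set.mem_range_self n)
    simpa [norm_mul, norm_pow, Complex.norm_real, abs_of_pos hs'0] using this
  -- the series of derivatives and its bound
  set g : ℕ → ℂ → ℂ := fun n y => co n / (n + 1) * (y - c) ^ (n + 1) with hg
  set g' : ℕ → ℂ → ℂ := fun n y => co n * (y - c) ^ n with hg'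
  have hderiv : ∀ n y, HasDerivAt (g n) (g' n y) y := by
    intro n y
    have h1 : HasDerivAt (fun y : ℂ => (y - c) ^ (n + 1))
        ((n + 1 : ℕ) * (y - c) ^ n * 1) y := by
      simpa using (((hasDerivAt_id y).sub_const c).fun_pow (n + 1))
    have := h1.const_mul (co n / (n + 1))
    refine this.congr_deriv ?_
    have hne : ((n : ℂ) + 1) ≠ 0 := Nat.cast_add_one_ne_zero n
    field_simp [hg, hg']
    simp only [hg']
    push_cast
    ring
  have hbound : ∀ n y, y ∈ ball c s → ‖g' n y‖ ≤ C * (s / s') ^ n := by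
    intro n y hy
    have hyc : ‖y - c‖ ≤ s := le_of_lt (by simpa [dist_eq_norm] using mem_ball.1 hy)
    calc ‖g' n y‖ = ‖co n‖ * ‖y - c‖ ^ n := by simp [hg', norm_mul, norm_pow]
      _ ≤ ‖co n‖ * s ^ n := by
          gcongr
      _ = (‖co n‖ * s' ^ n) * (s / s') ^ n := by
          rw [div_pow]
          field_simp
      _ ≤ C * (s / s') ^ n :=
          mul_le_mul_of_nonneg_right (hCn n) (by positivity)
  have hu' : Summable (fun n => C * (s / s') ^ n) := by
    have : |s / s'| < 1 := by
      rw [abs_of_pos (by positivity)]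
      rw [div_lt_one hs'0]
      exact hss'
    exact (summable_geometric_of_abs_lt_one this).mul_left C
  have h0 : Summable (fun n => g n c) := by
    apply summable_of_ne_finset_zero (s := ∅)
    intro n _
    simp [hg]
  have := hasDerivAt_tsum_of_isPreconnected hu' isOpen_ball
    (convex_ball c s).isPreconnected
    (fun n y _ => hderiv n y) hbound (mem_ball_self hs0) h0 (mem_ball.2 hus)
  rw [← (hsum u hu).tsum_eq]
  exact this

lemma exists_log {c : ℂ} {r : ℝ} (hr : 0 < r) {h : ℂ → ℂ}
    (hd : DifferentiableOn ℂ h (ball c r)) (hne : ∀ u ∈ ball c r, h u ≠ 0)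
    {z0 : ℂ} (hz0 : Complex.exp z0 = h c) :
    ∃ L : ℂ → ℂ, DifferentiableOn ℂ L (ball c r) ∧ L c = z0 ∧
      ∀ u ∈ ball c r, Complex.exp (L u) = h u := by
  have hdh : DifferentiableOn ℂ (deriv h) (ball c r) :=
    ((hd.analyticOnNhd isOpen_ball).deriv).differentiableOn
  have hq : DifferentiableOn ℂ (fun u => deriv h u / h u) (ball c r) :=
    hdh.div hd hne
  obtain ⟨F, hF⟩ := exists_primitive hq
  set L : ℂ → ℂ := fun u => F u - F c + z0 with hL
  have hLd : ∀ u ∈ ball c r, HasDerivAt L (deriv h u / h u) u := by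
    intro u hu
    exact ((hF u hu).sub_const (F c)).add_const z0
  have hLdiff : DifferentiableOn ℂ L (ball c r) := fun u hu =>
    ((hLd u hu).differentiableAt).differentiableWithinAt
  have hLc : L c = z0 := by simp [hL]
  refine ⟨L, hLdiff, hLc, ?_⟩
  set G : ℂ → ℂ := fun u => h u * Complex.exp (-L u) with hG
  have hGd : ∀ u ∈ ball c r, HasDerivAt G 0 u := by
    intro u hu
    have h1 : HasDerivAt h (deriv h u) u :=
      ((hd u hu).differentiableAt (isOpen_ball.mem_nhds hu)).hasDerivAt
    have h2 : HasDerivAt (fun u => Complex.exp (-L u))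
        (Complex.exp (-L u) * -(deriv h u / h u)) u := by
      simpa using ((hLd u hu).neg).cexp
    have := h1.mul h2
    refine this.congr_deriv ?_
    field_simp [hne u hu]
    ring
  have hGconst : ∀ u ∈ ball c r, G u = G c := by
    intro u hu
    have hGdiff : DifferentiableOn ℂ G (ball c r) := fun x hx =>
      ((hGd x hx).differentiableAt).differentiableWithinAt
    refine (convex_ball c r).is_const_of_fderivWithin_eq_zero hGdiff ?_ hu (mem_ball_self hr)
    intro x hx
    have h1 : fderivWithin ℂ G (ball c r) x = fderiv ℂ G x :=
      fderivWithin_of_isOpen isOpen_ball hx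
    rw [h1, (hGd x hx).hasFDerivAt.fderiv]
    refine ContinuousLinearMap.ext fun w => ?_
    simp
  intro u hu
  have h3 := hGconst u hu
  have h4 : G c = 1 := by
    simp only [hG, hLc, ← hz0, ← Complex.exp_add]
    simp
  rw [h4] at h3
  have h5 : h u * Complex.exp (-L u) = 1 := h3
  have := congrArg (fun w => w * Complex.exp (L u)) h5
  simpa [mul_assoc, ← Complex.exp_add] using this.symm

lemma schwarz_disc {p : ℂ} {t : ℝ} (ht : 0 < t) {h : ℂ → ℂ}
    (hd : DifferentiableOn ℂ h (ball p t)) (h0 : h p = 0)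
    {M : ℝ} (hM : ∀ u ∈ ball p t, ‖h u‖ ≤ M)
    (hμ : 0 < ‖deriv h p‖) :
    ball (0 : ℂ) (‖deriv h p‖ ^ 2 * t ^ 2 / (16 * (M + ‖deriv h p‖ * t)))
      ⊆ h '' (ball p t) := by
  set μ := ‖deriv h p‖ with hμdef
  have hM0 : 0 ≤ M := by
    have := hM p (mem_ball_self ht)
    simpa [h0] using this
  set K : ℝ := M + μ * t with hK
  have hK0 : 0 < K := by positivity
  have hKμt : μ * t ≤ K := by simp [hK]; positivity
  -- E and φ
  set E : ℂ → ℂ := fun u => h u - deriv h p * (u - p) with hE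
  have hEd : DifferentiableOn ℂ E (ball p t) := by
    apply hd.sub
    exact (((differentiable_id.sub_const p).const_mul (deriv h p))).differentiableOn
  have hE0 : E p = 0 := by simp [hE, h0]
  set φ : ℂ → ℂ := dslope (dslope E p) p with hφ
  have hEan : AnalyticAt ℂ E p := hEd.analyticAt (isOpen_ball.mem_nhds (mem_ball_self ht))
  obtain ⟨pE, hpE⟩ := hEan
  have hφan : AnalyticAt ℂ φ p :=
    (HasFPowerSeriesAt.has_fpower_series_dslope_fslope
      (HasFPowerSeriesAt.has_fpower_series_dslope_fslope hpE)).analyticAt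
  have hφd : DifferentiableOn ℂ φ (ball p t) := by
    intro u hu
    rcases eq_or_ne u p with rfl | hup
    · exact hφan.differentiableAt.differentiableWithinAt
    · rw [hφ, differentiableWithinAt_dslope_of_ne hup,
        differentiableWithinAt_dslope_of_ne hup]
      exact hEd u hu
  have hEφ : ∀ u, E u = φ u * (u - p) ^ 2 := by
    intro u
    have e1 : (u - p) • dslope E p u = E u - E p := sub_smul_dslope E p u
    have e2 : (u - p) • φ u = dslope E p u - dslope E p p := sub_smul_dslope (dslope E p) p u
    have e3 : dslope E p p = deriv E p := dslope_same E p
    have e4 : deriv E p = 0 := by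
      have h1 : HasDerivAt h (deriv h p) p :=
        ((hd p (mem_ball_self ht)).differentiableAt
          (isOpen_ball.mem_nhds (mem_ball_self ht))).hasDerivAt
      have h2 : HasDerivAt (fun u : ℂ => deriv h p * (u - p)) (deriv h p) p := by
        simpa using ((hasDerivAt_id p).sub_const p).const_mul (deriv h p)
      have := (h1.sub h2).deriv
      simp only [sub_self] at this
      exact this
    rw [e3, e4, sub_zero] at e2
    rw [hE0, sub_zero] at e1
    rw [← e1, ← e2]
    simp only [smul_eq_mul]
    ring
  -- bound on φ on closedBall p (t/2)
  have hφb : ∀ u ∈ closedBall p (t / 2), ‖φ u‖ ≤ 2 * K / t ^ 2 := by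
    intro u hu
    set ρ : ℝ := 3 * t / 4 with hρ
    have hρ0 : 0 < ρ := by positivity
    have hρt : ρ < t := by rw [hρ]; linarith
    have hsub : closedBall p ρ ⊆ ball p t := closedBall_subset_ball hρt
    have hdc : DiffContOnCl ℂ φ (ball p ρ) := by
      constructor
      · exact hφd.mono (ball_subset_ball hρt.le)
      · rw [closure_ball p hρ0.ne']
        exact (hφd.continuousOn).mono hsub
    have key := Complex.norm_le_of_forall_mem_frontier_norm_le isBounded_ball hdc
      (C := 2 * K / t ^ 2) ?_ (z := u) ?_
    · exact key
    · intro w hw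
      rw [frontier_ball p hρ0.ne'] at hw
      have hwp : ‖w - p‖ = ρ := by
        have := mem_sphere_iff_norm.1 hw
        simpa using this
      have hwball : w ∈ ball p t := hsub (sphere_subset_closedBall hw)
      have hEw : ‖E w‖ ≤ K := by
        rw [hE]
        calc ‖h w - deriv h p * (w - p)‖ ≤ ‖h w‖ + ‖deriv h p * (w - p)‖ := norm_sub_le _ _
          _ ≤ M + μ * ρ := by
              gcongr
              · exact hM w hwball
              · rw [norm_mul, hwp]
          _ ≤ M + μ * t := by gcongr
      have hφw : ‖φ w‖ * ρ ^ 2 = ‖E w‖ := by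
        rw [hEφ w, norm_mul, norm_pow, hwp]
      have hρ2 : (0:ℝ) < ρ ^ 2 := by positivity
      have h1 : ‖φ w‖ ≤ K / ρ ^ 2 := by
        rw [le_div_iff₀ hρ2, hφw]
        exact hEw
      refine h1.trans ?_
      rw [div_le_div_iff₀ hρ2 (by positivity)]
      have : ρ ^ 2 = 9 * t ^ 2 / 16 := by rw [hρ]; ring
      rw [this]
      nlinarith
    · rw [closure_ball p hρ0.ne']
      exact closedBall_subset_closedBall (by linarith) hu
  have hEb : ∀ u ∈ closedBall p (t / 2), ‖E u‖ ≤ 2 * K / t ^ 2 * ‖u - p‖ ^ 2 := by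
    intro u hu
    rw [hEφ u, norm_mul, norm_pow]
    exact mul_le_mul_of_nonneg_right (hφb u hu) (by positivity)
  set r : ℝ := μ * t ^ 2 / (4 * K) with hr
  have hr0 : 0 < r := by positivity
  have hrt4 : r ≤ t / 4 := by
    rw [hr, div_le_div_iff₀ (by positivity) (by norm_num)]
    nlinarith [hKμt, ht]
  set R : ℝ := μ ^ 2 * t ^ 2 / (16 * K) with hR
  have hR0 : 0 < R := by positivity
  have hRr : μ * r / 2 = 2 * R := by rw [hr, hR]; field_simp; ring
  intro w hw
  have hwR : ‖w‖ < R := by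
    exact mem_ball_zero_iff.1 hw
  by_contra hcon
  have hno : ∀ u ∈ closedBall p r, h u - w ≠ 0 := by
    intro u hu hzero
    exact hcon ⟨u, closedBall_subset_ball (by linarith) hu, (sub_eq_zero.1 hzero)⟩
  rcases eq_or_ne w 0 with rfl | hw0
  · exact hno p (mem_closedBall_self hr0.le) (by simp [h0])
  have hsph : ∀ u ∈ sphere p r, 2 * R - ‖w‖ ≤ ‖h u - w‖ := by
    intro u hu
    have hup : ‖u - p‖ = r := by simpa using mem_sphere_iff_norm.1 hu
    have huc : u ∈ closedBall p (t / 2) := by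
      rw [mem_closedBall, dist_eq_norm, hup]
      linarith
    have hEu : ‖E u‖ ≤ μ * r / 2 := by
      have := hEb u huc
      rw [hup] at this
      refine this.trans (le_of_eq ?_)
      rw [hr]
      field_simp
      ring
    have hdecomp : h u - w = deriv h p * (u - p) + (E u - w) := by
      simp only [hE]
      ring
    rw [hdecomp]
    have h1 : ‖deriv h p * (u - p)‖ = μ * r := by rw [norm_mul, hup, ← hμdef]
    calc 2 * R - ‖w‖ = μ * r - μ * r / 2 - ‖w‖ := by linarith [hRr]
      _ ≤ ‖deriv h p * (u - p)‖ - ‖E u - w‖ := by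
          rw [h1]
          have : ‖E u - w‖ ≤ ‖E u‖ + ‖w‖ := norm_sub_le _ _
          linarith
      _ ≤ ‖deriv h p * (u - p) + (E u - w)‖ := by
          have := norm_add_le (deriv h p * (u - p) + (E u - w)) (-(E u - w))
          simp only [add_neg_cancel_right, norm_neg] at this
          linarith
  have hm1 : 0 < 2 * R - ‖w‖ := by linarith
  have hsubt : closedBall p r ⊆ ball p t := closedBall_subset_ball (by linarith)
  have hdc2 : DiffContOnCl ℂ (fun u => (h u - w)⁻¹) (ball p r) := by
    constructor
    · refine DifferentiableOn.inv ?_ ?_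
      · exact (hd.mono ((ball_subset_closedBall).trans hsubt)).sub_const w
      · intro u hu
        exact hno u (ball_subset_closedBall hu)
    · rw [closure_ball p hr0.ne']
      refine ContinuousOn.inv₀ ?_ hno
      exact ((hd.continuousOn).mono hsubt).sub continuousOn_const
  have key := Complex.norm_le_of_forall_mem_frontier_norm_le isBounded_ball hdc2
    (C := (2 * R - ‖w‖)⁻¹) ?_ (z := p) ?_
  · have hkey : ‖(h p - w)⁻¹‖ ≤ (2 * R - ‖w‖)⁻¹ := key
    rw [h0, zero_sub, norm_inv, norm_neg] at hkey
    have hw0' : 0 < ‖w‖ := norm_pos_iff.2 hw0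
    have := (inv_le_inv₀ hw0' hm1).1 ?_
    · linarith
    · exact hkey
  · intro u hu
    rw [frontier_ball p hr0.ne'] at hu
    rw [norm_inv]
    exact inv_anti₀ hm1 (hsph u hu)
  · rw [closure_ball p hr0.ne']
    exact mem_closedBall_self hr0.le

lemma bloch {a : ℂ} {δ : ℝ} (hδ : 0 < δ) {g : ℂ → ℂ}
    (hg : DifferentiableOn ℂ g (ball a δ)) :
    ∃ p : ℂ, ball p (δ * ‖deriv g a‖ / 192) ⊆ g '' (ball a δ) := by
  set μ0 := ‖deriv g a‖ with hμ0def
  rcases (norm_nonneg (deriv g a)).eq_or_lt with hμ0 | hμ0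
  · refine ⟨g a, ?_⟩
    rw [← hμ0def] at *
    rw [← hμ0]
    simp only [mul_zero, zero_div]
    rw [ball_eq_empty.2 le_rfl]
    exact Set.empty_subset _
  -- main case
  have hδ2 : (0:ℝ) < δ / 2 := by positivity
  set ρfun : ℂ → ℝ := fun u => (δ / 2 - dist u a) * ‖deriv g u‖ with hρfun
  have hcont : ContinuousOn ρfun (closedBall a (δ / 2)) := by
    apply ContinuousOn.mul
    · exact (continuous_const.sub (continuous_id.dist continuous_const)).continuousOn
    · exact (((hg.analyticOnNhd isOpen_ball).deriv.continuousOn).mono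
        (closedBall_subset_ball (by linarith))).norm
  obtain ⟨p, hpmem, hpmax⟩ := (isCompact_closedBall a (δ / 2)).exists_isMaxOn
    ⟨a, mem_closedBall_self hδ2.le⟩ hcont
  have hmax : ∀ u ∈ closedBall a (δ / 2), ρfun u ≤ ρfun p := hpmax
  set ρp := ρfun p with hρp
  have hρpa : δ / 2 * μ0 ≤ ρp := by
    have := hmax a (mem_closedBall_self hδ2.le)
    simpa [hρfun, hμ0def] using this
  have hρp0 : 0 < ρp := lt_of_lt_of_le (by positivity) hρpa
  have hpa : dist p a < δ / 2 := by
    by_contra hcon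
    push_neg at hcon
    have : ρp ≤ 0 := mul_nonpos_of_nonpos_of_nonneg (by linarith) (norm_nonneg _)
    linarith
  set t : ℝ := (δ / 2 - dist p a) / 2 with hts
  have ht0 : 0 < t := by rw [hts]; linarith
  set νp := ‖deriv g p‖ with hνp
  have hν : ρp = 2 * t * νp := by
    rw [hρp, hρfun, hts, hνp]
    ring
  have hνp0 : 0 < νp := by
    rcases (norm_nonneg (deriv g p)).eq_or_lt with hz | hz
    · exfalso
      have hzz : νp = 0 := hνp.trans hz.symm
      rw [hν, hzz, mul_zero] at hρp0
      exact lt_irrefl 0 hρp0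
    · exact hz
  have hball_sub : ball p t ⊆ ball a δ := by
    intro u hu
    have := mem_ball.1 hu
    have h2 := dist_triangle u p a
    rw [mem_ball]
    rw [hts] at this
    linarith
  have hBd : ∀ u ∈ ball p t, ‖deriv g u‖ ≤ ρp / t := by
    intro u hu
    have hup : dist u p < t := mem_ball.1 hu
    have hua : dist u a < dist p a + t := by
      have := dist_triangle u p a
      linarith
    have huc : u ∈ closedBall a (δ / 2) := by
      rw [mem_closedBall]
      rw [hts] at hua
      linarith
    have h1 := hmax u huc
    rw [hρfun] at h1
    have h2 : t ≤ δ / 2 - dist u a := by rw [hts] at hua ⊢; linarith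
    have h3 : t * ‖deriv g u‖ ≤ ρp := by
      calc t * ‖deriv g u‖ ≤ (δ / 2 - dist u a) * ‖deriv g u‖ :=
            mul_le_mul_of_nonneg_right h2 (norm_nonneg _)
        _ ≤ ρp := h1
    rw [le_div_iff₀ ht0]
    linarith [h3]
  set h : ℂ → ℂ := fun u => g u - g p with hh
  have hd_h : DifferentiableOn ℂ h (ball p t) := (hg.mono hball_sub).sub_const (g p)
  have hM : ∀ u ∈ ball p t, ‖h u‖ ≤ ρp := by
    intro u hu
    have hdiff : ∀ x ∈ ball p t, DifferentiableAt ℂ g x := fun x hx =>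
      (hg x (hball_sub hx)).differentiableAt (isOpen_ball.mem_nhds (hball_sub hx))
    have := Convex.norm_image_sub_le_of_norm_deriv_le hdiff hBd (convex_ball p t)
      (mem_ball_self ht0) hu
    have hup : ‖u - p‖ ≤ t := by
      have := mem_ball.1 hu
      rw [← dist_eq_norm]
      linarith
    calc ‖h u‖ = ‖g u - g p‖ := rfl
      _ ≤ ρp / t * ‖u - p‖ := this
      _ ≤ ρp / t * t := by gcongr
      _ = ρp := by field_simp
  have hderivh : deriv h p = deriv g p := by
    rw [hh]
    simp [deriv_sub_const]
  have hνh : 0 < ‖deriv h p‖ := by rw [hderivh, ← hνp]; exact hνp0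
  have himg := schwarz_disc ht0 hd_h (by simp [hh]) hM hνh
  refine ⟨g p, ?_⟩
  intro w hw
  have hrad : δ * μ0 / 192 ≤ ‖deriv h p‖ ^ 2 * t ^ 2 / (16 * (ρp + ‖deriv h p‖ * t)) := by
    rw [hderivh, ← hνp, hν]
    have he : νp ^ 2 * t ^ 2 / (16 * (2 * t * νp + νp * t)) = νp * t / 48 := by
      field_simp
      ring
    rw [he]
    rw [div_le_div_iff₀ (by norm_num) (by norm_num)]
    nlinarith [hρpa, hν]
  have hw' : w - g p ∈ ball (0:ℂ) (‖deriv h p‖ ^ 2 * t ^ 2 / (16 * (ρp + ‖deriv h p‖ * t))) := by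
    rw [mem_ball_zero_iff]
    have := mem_ball_iff_norm.1 hw
    calc ‖w - g p‖ < δ * μ0 / 192 := this
      _ ≤ _ := hrad
  obtain ⟨u, hu, huw⟩ := himg hw'
  refine ⟨u, hball_sub hu, ?_⟩
  have : g u - g p = w - g p := huw
  linear_combination this

lemma exists_branch {lam : ℂ} (hlam : lam ≠ 0) {f : ℂ → ℂ}
    (hf : ∀ z, f z = lam * Complex.exp z) {δ : ℝ} (hδ : 0 < δ) :
    ∀ (k : ℕ) (a z : ℂ), f^[k] z = a → (∀ n : ℕ, f^[n] (0:ℂ) ∉ ball a δ) →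
    ∃ g : ℂ → ℂ, DifferentiableOn ℂ g (ball a δ) ∧ g a = z ∧
      ∀ u ∈ ball a δ, f^[k] (g u) = u := by
  intro k
  induction k with
  | zero =>
    intro a z hz hP
    simp only [Function.iterate_zero, id_eq] at hz
    exact ⟨id, differentiableOn_id, hz.symm, fun u _ => rfl⟩
  | succ k ih =>
    intro a z hz hP
    have hz1 : f^[k] (f z) = a := by
      rw [← Function.iterate_succ_apply]; exact hz
    obtain ⟨g1, hg1d, hg1a, hg1⟩ := ih a (f z) hz1 hP
    have hg1ne : ∀ u ∈ ball a δ, g1 u ≠ 0 := by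
      intro u hu h0
      apply hP k
      have := hg1 u hu
      rw [h0] at this
      rwa [this]
    set h2 : ℂ → ℂ := fun u => lam⁻¹ * g1 u with hh2
    have hd2 : DifferentiableOn ℂ h2 (ball a δ) := hg1d.const_mul _
    have hne2 : ∀ u ∈ ball a δ, h2 u ≠ 0 := fun u hu =>
      mul_ne_zero (inv_ne_zero hlam) (hg1ne u hu)
    have hz0 : Complex.exp z = h2 a := by
      rw [hh2]
      simp only
      rw [hg1a, hf z]
      field_simp
    obtain ⟨L, hLd, hLa, hLexp⟩ := exists_log hδ hd2 hne2 hz0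
    refine ⟨L, hLd, hLa, ?_⟩
    intro u hu
    have hfL : f (L u) = g1 u := by
      rw [hf, hLexp u hu, hh2]
      simp only
      field_simp
    rw [Function.iterate_succ_apply, hfL]
    exact hg1 u hu

lemma df_hasDerivAt {lam : ℂ} {f : ℂ → ℂ} (hf : ∀ z, f z = lam * Complex.exp z) :
    ∀ (k : ℕ) (z : ℂ), HasDerivAt (f^[k]) (Df f k z) z := by
  intro k
  induction k with
  | zero =>
    intro z
    simpa [Df] using hasDerivAt_id z
  | succ k ih =>
    intro z
    have hfat : ∀ w : ℂ, HasDerivAt f (f w) w := by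
      intro w
      have := (Complex.hasDerivAt_exp w).const_mul lam
      have heq : (fun z => lam * Complex.exp z) = f := by
        funext u; rw [hf u]
      rw [heq] at this
      rwa [← hf w] at this
    have hcomp := (hfat (f^[k] z)).comp z (ih z)
    have : f^[k + 1] = f ∘ f^[k] := by
      funext u
      exact Function.iterate_succ_apply' f k u
    rw [this]
    refine hcomp.congr_deriv ?_
    symm
    rw [Df, Df, Finset.prod_range_succ]
    rw [Function.iterate_succ_apply' f k z]
    ring

/-- if `dist(f^k(z), P(f)) > δ` then `|Df^k(z)| > β`. -/
theorem stmt_1 (lam : ℂ) (hlam : lam ≠ 0) (f : ℂ → ℂ)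
    (hf : ∀ z, f z = lam * Complex.exp z)
    (hPbdd : Bornology.IsBounded (postSing f))
    (n0 : ℕ) (hn0 : 1 ≤ n0) (α : ℝ) (hα : 0 < α)
    (hrep : ∀ z ∈ postSing f, Real.exp α < ‖Df f n0 z‖) :
    ∀ δ : ℝ, 0 < δ → ∃ β : ℝ, 0 < β ∧ ∀ (z : ℂ) (k : ℕ),
      δ < infDist (f^[k] z) (postSing f) → β < ‖Df f k z‖ := by
  intro δ hδ
  have hπ0 : (0:ℝ) < Real.pi := Real.pi_pos
  refine ⟨min (1/2) (δ / (193 * Real.pi)), by positivity, ?_⟩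
  intro z k hdist
  rcases Nat.eq_zero_or_pos k with rfl | hk
  · have : Df f 0 z = 1 := by simp [Df]
    rw [this]
    simp only [norm_one]
    calc min (1/2) (δ / (193 * Real.pi)) ≤ 1/2 := min_le_left _ _
      _ < 1 := by norm_num
  -- k ≥ 1
  set a := f^[k] z with ha
  have hPball : ∀ n : ℕ, f^[n] (0:ℂ) ∉ ball a δ := by
    intro n hn
    have hmem : f^[n] (0:ℂ) ∈ postSing f := subset_closure ⟨n, rfl⟩
    have h1 : infDist a (postSing f) ≤ dist a (f^[n] (0:ℂ)) :=
      infDist_le_dist_of_mem hmem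
    have h2 : dist a (f^[n] (0:ℂ)) < δ := by
      rw [dist_comm]
      exact mem_ball.1 hn
    linarith
  obtain ⟨g, hgd, hga, hgid⟩ := exists_branch hlam hf hδ k a z rfl hPball
  have haball : a ∈ ball a δ := mem_ball_self hδ
  have hgat : DifferentiableAt ℂ g a :=
    (hgd a haball).differentiableAt (isOpen_ball.mem_nhds haball)
  -- chain rule : Df f k z * deriv g a = 1
  have hDfg : HasDerivAt (f^[k] ∘ g) (Df f k z * deriv g a) a := by
    have h1 := (df_hasDerivAt hf k (g a)).comp a hgat.hasDerivAt
    rwa [hga] at h1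
  have hid : HasDerivAt (f^[k] ∘ g) 1 a := by
    have heq : Set.EqOn (f^[k] ∘ g) id (ball a δ) := fun u hu => hgid u hu
    have : (f^[k] ∘ g) =ᶠ[nhds a] id :=
      Filter.eventuallyEq_of_mem (isOpen_ball.mem_nhds haball) heq
    exact (hasDerivAt_id a).congr_of_eventuallyEq this
  have hprod : Df f k z * deriv g a = 1 := by
    have := hDfg.unique hid
    simpa using this
  have hDfne : Df f k z ≠ 0 := by
    intro h0
    rw [h0, zero_mul] at hprod
    exact one_ne_zero hprod.symm
  have hdga : deriv g a ≠ 0 := by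
    intro h0
    rw [h0, mul_zero] at hprod
    exact one_ne_zero hprod.symm
  -- Bloch
  obtain ⟨p, hp⟩ := bloch hδ hgd
  -- no disc of radius > π in the image
  have hπ : δ * ‖deriv g a‖ / 192 ≤ Real.pi := by
    by_contra hcon
    push_neg at hcon
    have hq1 : (p + Real.pi * Complex.I) ∈ ball p (δ * ‖deriv g a‖ / 192) := by
      rw [mem_ball, dist_eq_norm, add_sub_cancel_left]
      calc ‖(Real.pi : ℂ) * Complex.I‖ = Real.pi := by
            simp [norm_mul, Complex.norm_real, abs_of_pos hπ0]
        _ < δ * ‖deriv g a‖ / 192 := hcon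
    have hq2 : (p - Real.pi * Complex.I) ∈ ball p (δ * ‖deriv g a‖ / 192) := by
      rw [mem_ball, dist_eq_norm, sub_sub_cancel_left]
      calc ‖-((Real.pi : ℂ) * Complex.I)‖ = Real.pi := by
            simp [norm_mul, Complex.norm_real, abs_of_pos hπ0]
        _ < δ * ‖deriv g a‖ / 192 := hcon
    obtain ⟨u1, hu1, hgu1⟩ := hp hq1
    obtain ⟨u2, hu2, hgu2⟩ := hp hq2
    have hfe : f (g u1) = f (g u2) := by
      rw [hf, hf, hgu1, hgu2]
      have : Complex.exp (p + Real.pi * Complex.I) = Complex.exp (p - Real.pi * Complex.I) := by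
        rw [Complex.exp_add, Complex.exp_sub]
        rw [Complex.exp_pi_mul_I]
        field_simp
      rw [this]
    have hueq : u1 = u2 := by
      obtain ⟨k', rfl⟩ : ∃ k', k = k' + 1 := ⟨k - 1, (Nat.succ_pred_eq_of_pos hk).symm⟩
      have e1 := hgid u1 hu1
      have e2 := hgid u2 hu2
      rw [Function.iterate_succ_apply] at e1 e2
      rw [← e1, ← e2, hfe]
    rw [hueq, hgu2] at hgu1
    have : (2 : ℂ) * Real.pi * Complex.I = 0 := by linear_combination -hgu1
    simp [Complex.I_ne_zero, Real.pi_ne_zero] at this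
  -- conclude
  have habs : ‖Df f k z‖ = ‖deriv g a‖⁻¹ := by
    have h2 : ‖Df f k z‖ * ‖deriv g a‖ = 1 := by
      rw [← norm_mul, hprod, norm_one]
    exact eq_inv_of_mul_eq_one_left h2
  rw [habs]
  have hdga' : 0 < ‖deriv g a‖ := norm_pos_iff.2 hdga
  have hbound : ‖deriv g a‖ ≤ 192 * Real.pi / δ := by
    rw [div_le_iff₀ (by norm_num : (0:ℝ) < 192)] at hπ
    rw [le_div_iff₀ hδ]
    linarith [hπ]
  calc min (1/2) (δ / (193 * Real.pi)) ≤ δ / (193 * Real.pi) := min_le_right _ _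
    _ < δ / (192 * Real.pi) := by
        apply div_lt_div_of_pos_left hδ (by positivity)
        nlinarith [hπ0]
    _ ≤ ‖deriv g a‖⁻¹ := by
        rw [show δ / (192 * Real.pi) = (192 * Real.pi / δ)⁻¹ by rw [inv_div]]
        exact inv_anti₀ hdga' hbound
end

section
/- Under the Misiurewicz assumption, fix δ ∈ (0,1) with |Df^{n0}(w)| > exp(α/2) for all w ∈ B(P(f), 3δ), and set V := B(P(f), δ). Then there exists δ0 > 0 such that: if z ∈ ℂ, k ≥ 1, f^j(z) ∈ V for j = 1, …, k, and |Df^k(z)| > 1, then there is an open neighbourhood U of z with U ⊂ B(z, δ) such that f^k restricted to U is injective and f^k(U) = B(f^k(z), Δ·δ0). -/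
set_option maxHeartbeats 1000000

open Function Metric Set

lemma Df_zero (f : ℂ → ℂ) (z : ℂ) : Df f 0 z = 1 := by simp [Df]

lemma Df_one (f : ℂ → ℂ) (z : ℂ) : Df f 1 z = f z := by
  simp [Df, Function.iterate_one]

lemma Df_succ (f : ℂ → ℂ) (n : ℕ) (z : ℂ) :
    Df f (n + 1) z = Df f n z * f^[n + 1] z := by
  simp [Df, Finset.prod_range_succ]

lemma Df_add (f : ℂ → ℂ) (a b : ℕ) (z : ℂ) :
    Df f (a + b) z = Df f a z * Df f b (f^[a] z) := by
  unfold Df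
  rw [Finset.prod_range_add]
  congr 1
  refine Finset.prod_congr rfl fun i _ => ?_
  have h : a + i + 1 = i + 1 + a := by omega
  rw [h, Function.iterate_add_apply]

lemma hasDerivAt_iterate (lam : ℂ) (f : ℂ → ℂ) (hf : ∀ z, f z = lam * Complex.exp z)
    (n : ℕ) (z : ℂ) : HasDerivAt f^[n] (Df f n z) z := by
  induction n with
  | zero => simpa [Df_zero] using hasDerivAt_id z
  | succ n ih =>
    have hfd : ∀ y : ℂ, HasDerivAt f (f y) y := by
      intro y
      have h1 : HasDerivAt (fun w => lam * Complex.exp w) (lam * Complex.exp y) y :=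
        (Complex.hasDerivAt_exp y).const_mul lam
      have h2 : f = fun w => lam * Complex.exp w := funext hf
      rw [h2]
      exact h1
    have hcomp := (hfd (f^[n] z)).comp z ih
    have h3 : f ∘ f^[n] = f^[n + 1] := (Function.iterate_succ' f n).symm
    rw [h3] at hcomp
    have h4 : f (f^[n] z) = f^[n + 1] z := (Function.iterate_succ_apply' f n z).symm
    rw [h4] at hcomp
    rw [Df_succ]
    rw [mul_comm]
    exact hcomp

lemma Df_ne_zero (lam : ℂ) (hlam : lam ≠ 0) (f : ℂ → ℂ)
    (hf : ∀ z, f z = lam * Complex.exp z) (n : ℕ) (z : ℂ) : Df f n z ≠ 0 := by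
  unfold Df
  rw [Finset.prod_ne_zero_iff]
  intro i _
  rw [Function.iterate_succ_apply', hf]
  exact mul_ne_zero hlam (Complex.exp_ne_zero _)

lemma one_sub_sum_le_prod {ι : Type*} (s : Finset ι) (x : ι → ℝ)
    (h0 : ∀ i ∈ s, 0 ≤ x i) (h1 : ∀ i ∈ s, x i ≤ 1) :
    1 - ∑ i ∈ s, x i ≤ ∏ i ∈ s, (1 - x i) := by
  induction s using Finset.cons_induction with
  | empty => simp
  | cons a s ha ih =>
    rw [Finset.prod_cons, Finset.sum_cons]
    have hs0 : 0 ≤ ∑ i ∈ s, x i :=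
      Finset.sum_nonneg fun i hi => h0 i (Finset.mem_cons_of_mem hi)
    have hih := ih (fun i hi => h0 i (Finset.mem_cons_of_mem hi))
      (fun i hi => h1 i (Finset.mem_cons_of_mem hi))
    have hprod : 0 ≤ ∏ i ∈ s, (1 - x i) :=
      Finset.prod_nonneg fun i hi => by linarith [h1 i (Finset.mem_cons_of_mem hi)]
    have hxa0 := h0 a (Finset.mem_cons_self a s)
    have hxa1 := h1 a (Finset.mem_cons_self a s)
    nlinarith

lemma Df_lower (f : ℂ → ℂ) (t : ℕ) (y w : ℂ) (x : ℕ → ℝ)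
    (h0 : ∀ i < t, 0 ≤ x i) (h1 : ∀ i < t, x i ≤ 1)
    (h : ∀ i < t, ‖f^[i + 1] y - f^[i + 1] w‖ ≤ x i * ‖f^[i + 1] w‖) :
    (1 - ∑ i ∈ Finset.range t, x i) * ‖Df f t w‖ ≤ ‖Df f t y‖ := by
  have habs : ∀ v : ℂ, ‖Df f t v‖ = ∏ i ∈ Finset.range t, ‖f^[i + 1] v‖ :=
    fun v => by unfold Df; exact norm_prod _ _
  rw [habs, habs]
  have step : ∀ i ∈ Finset.range t,
      (1 - x i) * ‖f^[i + 1] w‖ ≤ ‖f^[i + 1] y‖ := by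
    intro i hi
    rw [Finset.mem_range] at hi
    have h2 := h i hi
    have h3 : ‖f^[i + 1] w‖ - ‖f^[i + 1] y‖
        ≤ ‖f^[i + 1] y - f^[i + 1] w‖ := by
      rw [norm_sub_rev]
      exact norm_sub_norm_le _ _
    nlinarith [norm_nonneg (f^[i + 1] w)]
  calc (1 - ∑ i ∈ Finset.range t, x i) * ∏ i ∈ Finset.range t, ‖f^[i + 1] w‖
      ≤ (∏ i ∈ Finset.range t, (1 - x i)) * ∏ i ∈ Finset.range t, ‖f^[i + 1] w‖ := by
        apply mul_le_mul_of_nonneg_right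
        · exact one_sub_sum_le_prod _ _ (fun i hi => h0 i (Finset.mem_range.mp hi))
            (fun i hi => h1 i (Finset.mem_range.mp hi))
        · exact Finset.prod_nonneg fun i _ => norm_nonneg _
    _ = ∏ i ∈ Finset.range t, (1 - x i) * ‖f^[i + 1] w‖ := by
        rw [← Finset.prod_mul_distrib]
    _ ≤ ∏ i ∈ Finset.range t, ‖f^[i + 1] y‖ := by
        apply Finset.prod_le_prod
        · intro i hi
          have := h1 i (Finset.mem_range.mp hi)
          have := norm_nonneg (f^[i + 1] w)
          nlinarith
        · exact step

lemma abs_log_le_two_mul {u : ℂ} (h : ‖u - 1‖ ≤ 1 / 2) :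
    ‖Complex.log u‖ ≤ 2 * ‖u - 1‖ := by
  have hmem : ∀ x : ℂ, x ∈ closedBall (1 : ℂ) (1 / 2) → x ∈ Complex.slitPlane := by
    intro x hx
    rw [mem_closedBall, dist_eq_norm] at hx
    rw [Complex.mem_slitPlane_iff]
    left
    have h5 : |(x - 1).re| ≤ 1 / 2 := (Complex.abs_re_le_norm _).trans hx
    have h6 : (x - 1).re ≥ -(1 / 2) := by cases abs_le.mp h5; assumption
    simp only [Complex.sub_re, Complex.one_re] at h6
    linarith
  have hball : u ∈ closedBall (1 : ℂ) (1 / 2) := by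
    rw [mem_closedBall, dist_eq_norm]; exact h
  have h1 : (1 : ℂ) ∈ closedBall (1 : ℂ) (1 / 2) := mem_closedBall_self (by norm_num)
  have := Convex.norm_image_sub_le_of_norm_hasDerivWithin_le
    (f := Complex.log) (f' := fun x => x⁻¹) (s := closedBall (1 : ℂ) (1 / 2)) (C := 2)
    (fun x hx => (Complex.hasDerivAt_log (hmem x hx)).hasDerivWithinAt)
    (fun x hx => by
      rw [norm_inv]
      have hx2 : (1 : ℝ) - 1 / 2 ≤ ‖x‖ := by
        rw [mem_closedBall, dist_eq_norm] at hx
        have := norm_sub_norm_le (1 : ℂ) x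
        rw [norm_sub_rev] at this
        simp only [norm_one] at this
        linarith
      rw [inv_le_comm₀ (by linarith) (by norm_num)]
      linarith)
    (convex_closedBall _ _) h1 hball
  simpa [Complex.log_one] using this

/-- with `V = B(P(f), δ)`, there is `δ0 > 0` such that if
`f^j(z) ∈ V` for `j = 1, …, k` and `|Df^k(z)| > 1`, then a neighbourhood
`U ⊆ B(z, δ)` of `z` is mapped injectively by `f^k` onto `B(f^k(z), Δ·δ0)`. -/
theorem stmt_7 (lam : ℂ) (hlam : lam ≠ 0) (f : ℂ → ℂ)
    (hf : ∀ z, f z = lam * Complex.exp z)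
    (hPbdd : Bornology.IsBounded (postSing f))
    (n0 : ℕ) (hn0 : 1 ≤ n0) (α : ℝ) (hα : 0 < α)
    (hrep : ∀ z ∈ postSing f, Real.exp α < ‖Df f n0 z‖)
    (δ : ℝ) (hδ0 : 0 < δ) (hδ1 : δ < 1)
    (hδ : ∀ w ∈ thickening (3 * δ) (postSing f),
      Real.exp (α / 2) < ‖Df f n0 w‖)
    (Δ : ℝ) (hΔ1 : 1 < Δ)
    (hΔ : ∀ g : ℂ → ℂ, DifferentiableOn ℂ g (ball (0 : ℂ) Δ) →
      InjOn g (ball (0 : ℂ) Δ) →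
      ∀ y ∈ ball (0 : ℂ) 1, ∀ w ∈ ball (0 : ℂ) 1,
        ‖deriv g y‖ ≤ 2 * ‖deriv g w‖) :
    ∃ δ0 : ℝ, 0 < δ0 ∧ ∀ (z : ℂ) (k : ℕ), 1 ≤ k →
      (∀ j : ℕ, 1 ≤ j → j ≤ k → f^[j] z ∈ thickening δ (postSing f)) →
      1 < ‖Df f k z‖ →
      ∃ U : Set ℂ, IsOpen U ∧ z ∈ U ∧ U ⊆ ball z δ ∧
        InjOn f^[k] U ∧ f^[k] '' U = ball (f^[k] z) (Δ * δ0) := by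
  set P := postSing f with hP
  have h0P : (0 : ℂ) ∈ P := subset_closure ⟨0, by simp⟩
  set T := closure (thickening (3 * δ) P) with hT
  have h3δ : (0 : ℝ) < 3 * δ := by linarith
  have hTne : T.Nonempty := ⟨0, subset_closure (self_subset_thickening h3δ _ h0P)⟩
  have hTbdd : Bornology.IsBounded T := hPbdd.thickening.closure
  have hTcomp : IsCompact T := Metric.isCompact_of_isClosed_isBounded isClosed_closure hTbdd
  obtain ⟨R, hR⟩ := hTbdd.subset_closedBall 0
  have hfc : Continuous f := by
    have h2 : f = fun w => lam * Complex.exp w := funext hf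
    rw [h2]; continuity
  -- lower bound m for |f| on T
  set m : ℝ := ‖lam‖ * Real.exp (-R) with hm
  have hmpos : 0 < m := mul_pos (norm_pos_iff.mpr hlam) (Real.exp_pos _)
  have hfy : ∀ y ∈ T, m ≤ ‖f y‖ := by
    intro y hy
    rw [hf, norm_mul, Complex.norm_exp]
    have h1 : ‖y‖ ≤ R := by
      have := hR hy
      rwa [mem_closedBall, dist_zero_right] at this
    have h2 : -R ≤ y.re := by
      have h4 := neg_abs_le (y.re)
      have h3 := Complex.abs_re_le_norm y
      linarith
    exact mul_le_mul_of_nonneg_left (Real.exp_le_exp.mpr h2) (norm_nonneg _)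
  -- expansion constants
  set lum : ℝ := Real.exp (α / (2 * n0)) with hlum
  have hlum1 : 1 < lum := by
    rw [hlum]
    rw [show (1:ℝ) = Real.exp 0 by simp]
    apply Real.exp_lt_exp.mpr
    positivity
  have hlumpos : 0 < lum := lt_trans one_pos hlum1
  have hlumn0 : lum ^ n0 = Real.exp (α / 2) := by
    rw [hlum, ← Real.exp_nat_mul]
    congr 1
    field_simp
  -- uniform lower bound on |Df^r| over T, r < n0
  have hcr : ∀ r : ℕ, ∃ c : ℝ, 0 < c ∧ ∀ y ∈ T, c ≤ ‖Df f r y‖ := by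
    intro r
    have hcont : ContinuousOn (fun y => ‖Df f r y‖) T := by
      apply Continuous.continuousOn
      apply continuous_norm.comp
      unfold Df
      exact continuous_finset_prod _ fun i _ => hfc.iterate (i + 1)
    obtain ⟨y0, hy0, hmin⟩ := hTcomp.exists_isMinOn hTne hcont
    refine ⟨‖Df f r y0‖, ?_, fun y hy => hmin hy⟩
    exact norm_pos_iff.mpr (Df_ne_zero lam hlam f hf r y0)
  choose cf hcfpos hcfle using hcr
  have hrange : (Finset.range n0).Nonempty := ⟨0, Finset.mem_range.mpr (by omega)⟩
  set c : ℝ := (Finset.range n0).inf' hrange cf with hc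
  have hcpos : 0 < c := by
    rw [hc, Finset.lt_inf'_iff]
    exact fun i _ => hcfpos i
  have hcle : ∀ r < n0, ∀ y ∈ T, c ≤ ‖Df f r y‖ := by
    intro r hr y hy
    exact le_trans (Finset.inf'_le cf (Finset.mem_range.mpr hr)) (hcfle r y hy)
  have hc1 : c ≤ 1 := by
    obtain ⟨y, hy⟩ := hTne
    have := hcle 0 (by omega) y hy
    rwa [Df_zero, norm_one] at this
  set C : ℝ := c / lum ^ n0 with hC
  have hCpos : 0 < C := div_pos hcpos (by positivity)
  have hC1 : C ≤ 1 := by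
    rw [hC, div_le_one (by positivity)]
    calc c ≤ 1 := hc1
      _ ≤ lum ^ n0 := one_le_pow₀ hlum1.le
  -- expansion lemma
  have expand : ∀ (mq : ℕ) (y : ℂ), (∀ i ≤ mq, f^[i] y ∈ thickening (3 * δ) P) →
      C * lum ^ mq ≤ ‖Df f mq y‖ := by
    intro mq
    induction mq using Nat.strong_induction_on with
    | _ mq ih =>
      intro y hy
      by_cases hcase : mq < n0
      · have hyT : y ∈ T := subset_closure (by simpa using hy 0 (by omega))
        calc C * lum ^ mq = c * (lum ^ mq / lum ^ n0) := by rw [hC]; ring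
          _ ≤ c * 1 := by
            apply mul_le_mul_of_nonneg_left _ hcpos.le
            rw [div_le_one (by positivity)]
            exact pow_le_pow_right₀ hlum1.le (by omega)
          _ = c := mul_one c
          _ ≤ ‖Df f mq y‖ := hcle mq hcase y hyT
      · push_neg at hcase
        obtain ⟨mq', rfl⟩ : ∃ mq', mq = n0 + mq' := ⟨mq - n0, by omega⟩
        rw [Df_add, norm_mul]
        have h1 : lum ^ n0 ≤ ‖Df f n0 y‖ := by
          rw [hlumn0]
          exact (hδ y (by simpa using hy 0 (by omega))).le
        have h2 : C * lum ^ mq' ≤ ‖Df f mq' (f^[n0] y)‖ := by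
          apply ih mq' (by omega)
          intro i hi
          rw [← Function.iterate_add_apply]
          exact hy (i + n0) (by omega)
        calc C * lum ^ (n0 + mq') = lum ^ n0 * (C * lum ^ mq') := by rw [pow_add]; ring
          _ ≤ ‖Df f n0 y‖ * ‖Df f mq' (f^[n0] y)‖ :=
            mul_le_mul h1 h2 (by positivity) (norm_nonneg _)
  -- small-scale constants
  set q : ℝ := lum⁻¹ with hq
  have hq0 : 0 < q := by positivity
  have hq1 : q < 1 := by
    rw [hq]
    exact inv_lt_one_of_one_lt₀ hlum1
  have hgeom : ∀ t : ℕ, ∑ i ∈ Finset.range t, q ^ i ≤ 1 / (1 - q) := by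
    intro t
    rw [geom_sum_eq (ne_of_lt hq1)]
    have hq1' : (0:ℝ) < 1 - q := by linarith
    have heq : (q ^ t - 1) / (q - 1) = (1 - q ^ t) / (1 - q) := by
      rw [div_eq_div_iff (by linarith) (by linarith)]
      ring
    rw [heq, div_le_div_iff₀ hq1' hq1']
    nlinarith [pow_nonneg hq0.le t]
  set β : ℝ := 4 / C with hβ
  have hβpos : 0 < β := by positivity
  have hβ1 : 1 ≤ β := by
    rw [hβ]
    rw [le_div_iff₀ hCpos]
    linarith
  set r : ℝ := min (min (δ / 4) (C / 4)) (m * C * (1 - q) / 8) with hrdef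
  have hrpos : 0 < r := by
    apply lt_min (lt_min (by linarith) (by linarith))
    have : (0:ℝ) < 1 - q := by linarith
    positivity
  have hrδ : 4 * r ≤ δ := by
    have := min_le_left (min (δ / 4) (C / 4)) (m * C * (1 - q) / 8)
    have := min_le_left (δ / 4) (C / 4)
    have h3 : r ≤ δ / 4 := le_trans (min_le_left _ _) (min_le_left _ _)
    linarith
  have hrC : 4 * r ≤ C := by
    have h3 : r ≤ C / 4 := le_trans (min_le_left _ _) (min_le_right _ _)
    linarith
  have hr14 : r ≤ 1 / 4 := by nlinarith
  have hβrm : β * r ≤ m * (1 - q) / 2 := by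
    have h3 : r ≤ m * C * (1 - q) / 8 := min_le_right _ _
    have : β * r = 4 * r / C := by rw [hβ]; ring
    rw [this, div_le_iff₀ hCpos]
    nlinarith
  have hsumhalf : ∀ t : ℕ, ∑ i ∈ Finset.range t, β * r / m * q ^ i ≤ 1 / 2 := by
    intro t
    rw [← Finset.mul_sum]
    have h1 := hgeom t
    have h2 : (0:ℝ) < 1 - q := by linarith
    have h3 : 0 ≤ β * r / m := by positivity
    calc β * r / m * ∑ i ∈ Finset.range t, q ^ i ≤ β * r / m * (1 / (1 - q)) :=
          mul_le_mul_of_nonneg_left h1 h3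
      _ ≤ 1 / 2 := by
          rw [div_mul_div_comm, div_le_div_iff₀ (by positivity) (by norm_num)]
          nlinarith
  refine ⟨r / Δ, by positivity, ?_⟩
  intro z k hk horb hDfz
  obtain ⟨k', rfl⟩ : ∃ k', k = k' + 1 := ⟨k - 1, by omega⟩
  clear hk
  set w : ℕ → ℂ := fun i => f^[i] z with hwdef
  set B : Set ℂ := ball (w (k' + 1)) r with hB
  have hwadd : ∀ a b : ℕ, f^[a] (w b) = w (a + b) :=
    fun a b => (Function.iterate_add_apply f a b z).symm
  have hwsucc : ∀ i : ℕ, w (i + 1) = f (w i) := fun i => Function.iterate_succ_apply' f i z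
  have hwT3 : ∀ i : ℕ, 1 ≤ i → i ≤ k' + 1 → w i ∈ thickening (3 * δ) P := by
    intro i h1 h2
    exact thickening_mono (by linarith) P (horb i h1 h2)
  have hwm : ∀ i : ℕ, 2 ≤ i → i ≤ k' + 1 → m ≤ ‖w i‖ := by
    intro i h1 h2
    obtain ⟨i', rfl⟩ : ∃ i', i = i' + 1 := ⟨i - 1, by omega⟩
    rw [hwsucc]
    exact hfy _ (subset_closure (hwT3 i' (by omega) (by omega)))
  have hwne : ∀ i : ℕ, 1 ≤ i → w i ≠ 0 := by
    intro i h1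
    obtain ⟨i', rfl⟩ : ∃ i', i = i' + 1 := ⟨i - 1, by omega⟩
    rw [hwsucc, hf]
    exact mul_ne_zero hlam (Complex.exp_ne_zero _)
  have hsplit : ∀ (jj tt : ℕ), Df f (tt + 1) (w jj) = w (jj + 1) * Df f tt (w (jj + 1)) := by
    intro jj tt
    have h2 : tt + 1 = 1 + tt := by omega
    rw [h2, Df_add f 1 tt (w jj), Df_one, Function.iterate_one, ← hwsucc jj]
  -- comparison estimate
  have comp : ∀ (t jp : ℕ) (g : ℂ → ℂ), 1 ≤ jp → jp + t ≤ k' + 1 →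
      (∀ ζ ∈ B, ∀ i, i ≤ t → ‖f^[i] (g ζ) - w (jp + i)‖ ≤ β * r * q ^ (t - i)) →
      ∀ η ∈ B, ‖Df f t (w jp)‖ / 2 ≤ ‖Df f t (g η)‖ := by
    intro t jp g hjp hjpt hgc η hη
    set x : ℕ → ℝ := fun i => β * r / m * q ^ (t - 1 - i) with hx
    have hxsum : ∑ i ∈ Finset.range t, x i ≤ 1 / 2 := by
      have h1 := Finset.sum_range_reflect (fun i => β * r / m * q ^ i) t
      calc ∑ i ∈ Finset.range t, x i = ∑ i ∈ Finset.range t, β * r / m * q ^ i := h1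
        _ ≤ 1 / 2 := hsumhalf t
    have hlow := Df_lower f t (g η) (w jp) x
      (fun i _ => by positivity)
      (fun i _ => by
        have hq2 : q ^ (t - 1 - i) ≤ 1 := pow_le_one₀ hq0.le hq1.le
        have h4 : β * r ≤ m := by nlinarith
        rw [hx]
        calc β * r / m * q ^ (t - 1 - i) ≤ β * r / m * 1 :=
              mul_le_mul_of_nonneg_left hq2 (by positivity)
          _ ≤ 1 := by rw [mul_one, div_le_one hmpos]; exact h4)
      (fun i hi => by
        have h5 : f^[i + 1] (w jp) = w (jp + (i + 1)) := by
          rw [hwadd]; congr 1; omega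
        rw [h5]
        have h6 := hgc η hη (i + 1) (by omega)
        have h7 : t - (i + 1) = t - 1 - i := by omega
        rw [h7] at h6
        have h8 : m ≤ ‖w (jp + (i + 1))‖ := hwm _ (by omega) (by omega)
        calc ‖f^[i+1] (g η) - w (jp + (i + 1))‖ ≤ β * r * q ^ (t - 1 - i) := h6
          _ = β * r / m * q ^ (t - 1 - i) * m := by field_simp
          _ ≤ x i * ‖w (jp + (i + 1))‖ := by
              rw [hx]
              exact mul_le_mul_of_nonneg_left h8 (by positivity))
    have habsnn := norm_nonneg (Df f t (w jp))
    nlinarith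
  -- main inverse-branch induction
  have key : ∀ t j : ℕ, j + t = k' + 1 → 1 ≤ j → ∃ g : ℂ → ℂ,
      g (w (k' + 1)) = w j ∧
      (∀ ζ ∈ B, f^[t] (g ζ) = ζ) ∧
      (∀ ζ ∈ B, HasDerivAt g (Df f t (g ζ))⁻¹ ζ) ∧
      (∀ ζ ∈ B, ∀ i, i ≤ t → ‖f^[i] (g ζ) - w (j + i)‖ ≤ β * r * q ^ (t - i)) := by
    intro t
    induction t with
    | zero =>
      intro j hjk _
      have hj : j = k' + 1 := by omega
      subst hj
      refine ⟨id, rfl, fun ζ _ => rfl, fun ζ _ => ?_, fun ζ hζ i hi => ?_⟩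
      · simpa [Df_zero] using hasDerivAt_id ζ
      · interval_cases i
        simp only [Function.iterate_zero_apply, id_eq, Nat.add_zero, Nat.sub_zero, pow_zero,
          mul_one]
        have h1 : ‖ζ - w (k' + 1)‖ < r := by
          rw [← Complex.dist_eq]; exact mem_ball.mp hζ
        nlinarith
    | succ t ih =>
      intro j hjk hj
      obtain ⟨g, hgK, hginv, hgd, hgc⟩ := ih (j + 1) (by omega) (by omega)
      have hwj1ne : w (j + 1) ≠ 0 := hwne (j + 1) (by omega)
      have hwj1abs : 0 < ‖w (j + 1)‖ := norm_pos_iff.mpr hwj1ne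
      have hexp : C * lum ^ (t + 1) ≤ ‖Df f (t + 1) (w j)‖ := by
        apply expand
        intro i hi
        rw [hwadd]
        exact hwT3 (i + j) (by omega) (by omega)
      have hcomp := comp t (j + 1) g (by omega) (by omega) hgc
      have hDsplit : ‖Df f (t + 1) (w j)‖
          = ‖w (j + 1)‖ * ‖Df f t (w (j + 1))‖ := by
        rw [hsplit j t, norm_mul]
      set K : ℝ := 2 * ‖w (j + 1)‖ * q ^ (t + 1) / C with hK
      have hKpos : 0 < K := by positivity
      have hgdb : ∀ η ∈ B, ‖(Df f t (g η))⁻¹‖ ≤ K := by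
        intro η hη
        rw [norm_inv]
        have hA := hcomp η hη
        have hgpos : 0 < ‖Df f t (g η)‖ :=
          norm_pos_iff.mpr (Df_ne_zero lam hlam f hf _ _)
        rw [inv_le_comm₀ hgpos hKpos]
        have hql : q ^ (t + 1) = (lum ^ (t + 1))⁻¹ := by rw [hq, inv_pow]
        have h1K : K⁻¹ = C * lum ^ (t + 1) / (2 * ‖w (j + 1)‖) := by
          rw [hK, hql]
          have hl : (0:ℝ) < lum ^ (t + 1) := by positivity
          field_simp
        rw [h1K, div_le_iff₀ (by positivity)]
        have hA2 := mul_le_mul_of_nonneg_left hA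
          (le_of_lt (by positivity : (0:ℝ) < 2 * ‖w (j + 1)‖))
        nlinarith [hexp, hDsplit]
      have hlip : ∀ ζ ∈ B, ‖g ζ - w (j + 1)‖ ≤ K * ‖ζ - w (k' + 1)‖ := by
        intro ζ hζ
        have hmv := Convex.norm_image_sub_le_of_norm_hasDerivWithin_le
          (f := g) (f' := fun η => (Df f t (g η))⁻¹) (s := B) (C := K)
          (fun η hη => (hgd η hη).hasDerivWithinAt)
          (fun η hη => by exact hgdb η hη)
          (convex_ball _ _) (mem_ball_self hrpos) hζ
        rw [hgK] at hmv
        simpa using hmv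
      have hK1 : K ≤ 2 * ‖w (j + 1)‖ / C := by
        have hq2 : q ^ (t + 1) ≤ 1 := pow_le_one₀ hq0.le hq1.le
        calc K = 2 * ‖w (j + 1)‖ / C * q ^ (t + 1) := by rw [hK]; ring
          _ ≤ 2 * ‖w (j + 1)‖ / C * 1 :=
              mul_le_mul_of_nonneg_left hq2 (by positivity)
          _ = 2 * ‖w (j + 1)‖ / C := mul_one _
      have hrC' : r / C ≤ 1 / 4 := by
        rw [div_le_div_iff₀ hCpos (by norm_num)]
        linarith
      have hKr : K * r ≤ ‖w (j + 1)‖ / 2 := by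
        calc K * r ≤ 2 * ‖w (j + 1)‖ / C * r :=
              mul_le_mul_of_nonneg_right hK1 hrpos.le
          _ = 2 * ‖w (j + 1)‖ * (r / C) := by ring
          _ ≤ 2 * ‖w (j + 1)‖ * (1 / 4) := by
              apply mul_le_mul_of_nonneg_left hrC' (by positivity)
          _ ≤ ‖w (j + 1)‖ / 2 := by linarith
      have hrel : ∀ ζ ∈ B, ‖g ζ - w (j + 1)‖ ≤ ‖w (j + 1)‖ / 2 := by
        intro ζ hζ
        have h1 := hlip ζ hζ
        have h2 : ‖ζ - w (k' + 1)‖ ≤ r := by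
          rw [← Complex.dist_eq]; exact (mem_ball.mp hζ).le
        calc ‖g ζ - w (j + 1)‖ ≤ K * ‖ζ - w (k' + 1)‖ := h1
          _ ≤ K * r := mul_le_mul_of_nonneg_left h2 hKpos.le
          _ ≤ ‖w (j + 1)‖ / 2 := hKr
      have hu : ∀ ζ ∈ B, ‖g ζ / w (j + 1) - 1‖ ≤ 1 / 2 := by
        intro ζ hζ
        have h1 : g ζ / w (j + 1) - 1 = (g ζ - w (j + 1)) / w (j + 1) := by
          field_simp
        rw [h1, norm_div, div_le_iff₀ hwj1abs]
        have := hrel ζ hζ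
        linarith
      have huslit : ∀ ζ ∈ B, g ζ / w (j + 1) ∈ Complex.slitPlane := by
        intro ζ hζ
        rw [Complex.mem_slitPlane_iff]
        left
        have h1 := hu ζ hζ
        have h2 : |(g ζ / w (j + 1) - 1).re| ≤ 1 / 2 :=
          le_trans (Complex.abs_re_le_norm _) h1
        have h3 := (abs_le.mp h2).1
        have h4 : (g ζ / w (j + 1) - 1).re = (g ζ / w (j + 1)).re - 1 := by
          simp [Complex.sub_re]
        linarith
      have hgne : ∀ ζ ∈ B, g ζ ≠ 0 := by
        intro ζ hζ h0
        have h5 := hrel ζ hζ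
        rw [h0] at h5
        have h6 : ‖0 - w (j + 1)‖ = ‖w (j + 1)‖ := by simp
        rw [h6] at h5
        linarith
      set g' : ℂ → ℂ := fun ζ => w j + Complex.log (g ζ / w (j + 1)) with hg'
      have hfg' : ∀ ζ ∈ B, f (g' ζ) = g ζ := by
        intro ζ hζ
        have hu0 : g ζ / w (j + 1) ≠ 0 := div_ne_zero (hgne ζ hζ) hwj1ne
        show f (w j + Complex.log (g ζ / w (j + 1))) = g ζ
        rw [hf, Complex.exp_add, Complex.exp_log hu0, ← mul_assoc]
        have h1 : lam * Complex.exp (w j) = w (j + 1) := by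
          rw [← hf, ← hwsucc]
        rw [h1, mul_comm (w (j + 1)) _, div_mul_cancel₀ _ hwj1ne]
      refine ⟨g', ?_, ?_, ?_, ?_⟩
      · show w j + Complex.log (g (w (k' + 1)) / w (j + 1)) = w j
        rw [hgK, div_self hwj1ne, Complex.log_one, add_zero]
      · intro ζ hζ
        rw [Function.iterate_succ_apply, hfg' ζ hζ]
        exact hginv ζ hζ
      · intro ζ hζ
        have h1 : HasDerivAt (fun η => g η / w (j + 1)) ((Df f t (g ζ))⁻¹ / w (j + 1)) ζ :=
          (hgd ζ hζ).div_const _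
        have h2 : HasDerivAt Complex.log (g ζ / w (j + 1))⁻¹ (g ζ / w (j + 1)) :=
          Complex.hasDerivAt_log (huslit ζ hζ)
        have h3 := (h2.comp ζ h1).const_add (w j)
        have h4 : Df f (t + 1) (g' ζ) = g ζ * Df f t (g ζ) := by
          have h5 : ∀ i : ℕ, f^[i + 1] (g' ζ) = f^[i] (g ζ) := fun i => by
            rw [Function.iterate_succ_apply, hfg' ζ hζ]
          show (∏ i ∈ Finset.range (t + 1), f^[i + 1] (g' ζ))
              = g ζ * ∏ i ∈ Finset.range t, f^[i + 1] (g ζ)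
          rw [Finset.prod_range_succ']
          rw [Finset.prod_congr rfl fun i _ => h5 (i + 1)]
          rw [h5 0]
          simp [mul_comm]
        have h6 : (Df f (t + 1) (g' ζ))⁻¹
            = (g ζ / w (j + 1))⁻¹ * ((Df f t (g ζ))⁻¹ / w (j + 1)) := by
          rw [h4]
          have hd0 : Df f t (g ζ) ≠ 0 := Df_ne_zero lam hlam f hf _ _
          field_simp [hgne ζ hζ]
        rw [h6]
        exact h3
      · intro ζ hζ i hi
        cases i with
        | zero =>
          simp only [Function.iterate_zero_apply, Nat.add_zero, Nat.sub_zero]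
          have he : g' ζ - w j = Complex.log (g ζ / w (j + 1)) := by
            show w j + Complex.log (g ζ / w (j + 1)) - w j = _
            ring
          rw [he]
          have h7 := abs_log_le_two_mul (hu ζ hζ)
          have h8 : ‖g ζ / w (j + 1) - 1‖
              = ‖g ζ - w (j + 1)‖ / ‖w (j + 1)‖ := by
            rw [show g ζ / w (j + 1) - 1 = (g ζ - w (j + 1)) / w (j + 1) by field_simp,
              norm_div]
          have h9 := hlip ζ hζ
          have h10 : ‖ζ - w (k' + 1)‖ ≤ r := by
            rw [← Complex.dist_eq]; exact (mem_ball.mp hζ).le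
          calc ‖Complex.log (g ζ / w (j + 1))‖
              ≤ 2 * (‖g ζ - w (j + 1)‖ / ‖w (j + 1)‖) := by
                rw [← h8]; linarith [h7]
            _ ≤ 2 * (K * r / ‖w (j + 1)‖) := by
                have h11 : ‖g ζ - w (j + 1)‖ ≤ K * r := by
                  calc ‖g ζ - w (j + 1)‖ ≤ K * ‖ζ - w (k' + 1)‖ := h9
                    _ ≤ K * r := mul_le_mul_of_nonneg_left h10 hKpos.le
                gcongr
            _ = β * r * q ^ (t + 1) := by
                rw [hK, hβ]
                field_simp
                ring
        | succ i' =>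
          have h5 : f^[i' + 1] (g' ζ) = f^[i'] (g ζ) := by
            rw [Function.iterate_succ_apply, hfg' ζ hζ]
          rw [h5]
          have h6 := hgc ζ hζ i' (by omega)
          have h7 : j + (i' + 1) = j + 1 + i' := by omega
          have h8 : t + 1 - (i' + 1) = t - i' := by omega
          rw [h7, h8]
          exact h6
  -- final pullback step to level 0
  obtain ⟨g1, hg1K, hg1inv, hg1d, hg1c⟩ := key k' 1 (by omega) le_rfl
  have hw1ne : w 1 ≠ 0 := hwne 1 le_rfl
  have hw1abs : 0 < ‖w 1‖ := norm_pos_iff.mpr hw1ne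
  have hcomp1 := comp k' 1 g1 le_rfl (by omega) hg1c
  have hDfz' : 1 < ‖w 1‖ * ‖Df f k' (w 1)‖ := by
    have h1 := hsplit 0 k'
    have h2 : w 0 = z := rfl
    rw [h2] at h1
    rw [← norm_mul, ← h1]
    exact hDfz
  have hg1db : ∀ η ∈ B, ‖(Df f k' (g1 η))⁻¹‖ ≤ 2 * ‖w 1‖ := by
    intro η hη
    rw [norm_inv]
    have hA := hcomp1 η hη
    have hgpos : 0 < ‖Df f k' (g1 η)‖ :=
      norm_pos_iff.mpr (Df_ne_zero lam hlam f hf _ _)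
    rw [inv_le_comm₀ hgpos (by positivity)]
    have h3 : (2 * ‖w 1‖)⁻¹ ≤ ‖Df f k' (w 1)‖ / 2 := by
      rw [inv_eq_one_div, div_le_div_iff₀ (by positivity) (by norm_num)]
      nlinarith
    exact le_trans h3 hA
  have hlip1 : ∀ ζ ∈ B,
      ‖g1 ζ - w 1‖ ≤ 2 * ‖w 1‖ * ‖ζ - w (k' + 1)‖ := by
    intro ζ hζ
    have hmv := Convex.norm_image_sub_le_of_norm_hasDerivWithin_le
      (f := g1) (f' := fun η => (Df f k' (g1 η))⁻¹) (s := B) (C := 2 * ‖w 1‖)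
      (fun η hη => (hg1d η hη).hasDerivWithinAt)
      (fun η hη => by exact hg1db η hη)
      (convex_ball _ _) (mem_ball_self hrpos) hζ
    rw [hg1K] at hmv
    simpa using hmv
  have hrel1 : ∀ ζ ∈ B, ‖g1 ζ - w 1‖ ≤ ‖w 1‖ / 2 := by
    intro ζ hζ
    have h1 := hlip1 ζ hζ
    have h2 : ‖ζ - w (k' + 1)‖ ≤ r := by
      rw [← Complex.dist_eq]; exact (mem_ball.mp hζ).le
    nlinarith
  have hu1 : ∀ ζ ∈ B, ‖g1 ζ / w 1 - 1‖ ≤ 1 / 2 := by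
    intro ζ hζ
    have h1 : g1 ζ / w 1 - 1 = (g1 ζ - w 1) / w 1 := by field_simp
    rw [h1, norm_div, div_le_iff₀ hw1abs]
    have := hrel1 ζ hζ
    linarith
  have huslit1 : ∀ ζ ∈ B, g1 ζ / w 1 ∈ Complex.slitPlane := by
    intro ζ hζ
    rw [Complex.mem_slitPlane_iff]
    left
    have h1 := hu1 ζ hζ
    have h2 : |(g1 ζ / w 1 - 1).re| ≤ 1 / 2 := le_trans (Complex.abs_re_le_norm _) h1
    have h3 := (abs_le.mp h2).1
    have h4 : (g1 ζ / w 1 - 1).re = (g1 ζ / w 1).re - 1 := by simp [Complex.sub_re]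
    linarith
  have hg1ne : ∀ ζ ∈ B, g1 ζ ≠ 0 := by
    intro ζ hζ h0
    have h5 := hrel1 ζ hζ
    rw [h0] at h5
    have h6 : ‖0 - w 1‖ = ‖w 1‖ := by simp
    rw [h6] at h5
    linarith
  set g0 : ℂ → ℂ := fun ζ => z + Complex.log (g1 ζ / w 1) with hg0
  have hfg0 : ∀ ζ ∈ B, f (g0 ζ) = g1 ζ := by
    intro ζ hζ
    have hu0 : g1 ζ / w 1 ≠ 0 := div_ne_zero (hg1ne ζ hζ) hw1ne
    show f (z + Complex.log (g1 ζ / w 1)) = g1 ζ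
    rw [hf, Complex.exp_add, Complex.exp_log hu0, ← mul_assoc]
    have h1 : lam * Complex.exp z = w 1 := by rw [← hf]; rfl
    rw [h1, mul_comm (w 1) _, div_mul_cancel₀ _ hw1ne]
  have hg0K : g0 (w (k' + 1)) = z := by
    show z + Complex.log (g1 (w (k' + 1)) / w 1) = z
    rw [hg1K, div_self hw1ne, Complex.log_one, add_zero]
  have hg0inv : ∀ ζ ∈ B, f^[k' + 1] (g0 ζ) = ζ := by
    intro ζ hζ
    rw [Function.iterate_succ_apply, hfg0 ζ hζ]
    exact hg1inv ζ hζ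
  have hg0d : ∀ ζ ∈ B, HasDerivAt g0 (Df f (k' + 1) (g0 ζ))⁻¹ ζ := by
    intro ζ hζ
    have h1 : HasDerivAt (fun η => g1 η / w 1) ((Df f k' (g1 ζ))⁻¹ / w 1) ζ :=
      (hg1d ζ hζ).div_const _
    have h2 : HasDerivAt Complex.log (g1 ζ / w 1)⁻¹ (g1 ζ / w 1) :=
      Complex.hasDerivAt_log (huslit1 ζ hζ)
    have h3 := (h2.comp ζ h1).const_add z
    have h4 : Df f (k' + 1) (g0 ζ) = g1 ζ * Df f k' (g1 ζ) := by
      have h5 : ∀ i : ℕ, f^[i + 1] (g0 ζ) = f^[i] (g1 ζ) := fun i => by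
        rw [Function.iterate_succ_apply, hfg0 ζ hζ]
      show (∏ i ∈ Finset.range (k' + 1), f^[i + 1] (g0 ζ))
          = g1 ζ * ∏ i ∈ Finset.range k', f^[i + 1] (g1 ζ)
      rw [Finset.prod_range_succ']
      rw [Finset.prod_congr rfl fun i _ => h5 (i + 1)]
      rw [h5 0]
      simp [mul_comm]
    have h6 : (Df f (k' + 1) (g0 ζ))⁻¹
        = (g1 ζ / w 1)⁻¹ * ((Df f k' (g1 ζ))⁻¹ / w 1) := by
      rw [h4]
      have hd0 : Df f k' (g1 ζ) ≠ 0 := Df_ne_zero lam hlam f hf _ _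
      field_simp [hg1ne ζ hζ]
    rw [h6]
    exact h3
  have hg0dist : ∀ ζ ∈ B, ‖g0 ζ - z‖ ≤ 4 * ‖ζ - w (k' + 1)‖ := by
    intro ζ hζ
    have he : g0 ζ - z = Complex.log (g1 ζ / w 1) := by
      show z + Complex.log (g1 ζ / w 1) - z = _
      ring
    rw [he]
    have h7 := abs_log_le_two_mul (hu1 ζ hζ)
    have h8 : ‖g1 ζ / w 1 - 1‖
        = ‖g1 ζ - w 1‖ / ‖w 1‖ := by
      rw [show g1 ζ / w 1 - 1 = (g1 ζ - w 1) / w 1 by field_simp, norm_div]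
    have h9 := hlip1 ζ hζ
    calc ‖Complex.log (g1 ζ / w 1)‖
        ≤ 2 * (‖g1 ζ - w 1‖ / ‖w 1‖) := by
          rw [← h8]; linarith [h7]
      _ ≤ 2 * (2 * ‖w 1‖ * ‖ζ - w (k' + 1)‖ / ‖w 1‖) := by
          gcongr
      _ = 4 * ‖ζ - w (k' + 1)‖ := by field_simp; ring
  -- assembly
  have hballeq : ball (f^[k' + 1] z) (Δ * (r / Δ)) = B := by
    have h1 : Δ * (r / Δ) = r := by field_simp
    rw [h1]
  refine ⟨g0 '' B, ?_, ⟨w (k' + 1), mem_ball_self hrpos, hg0K⟩, ?_, ?_, ?_⟩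
  · rw [isOpen_iff_mem_nhds]
    rintro u ⟨ζ, hζ, rfl⟩
    have hdiff : DifferentiableOn ℂ g0 B :=
      fun η hη => (hg0d η hη).differentiableAt.differentiableWithinAt
    have hana : AnalyticAt ℂ g0 ζ := hdiff.analyticAt (isOpen_ball.mem_nhds hζ)
    obtain ⟨p, hp⟩ := hana
    have hstrict := hp.hasStrictDerivAt
    have hval : (p 1 fun _ => 1) = (Df f (k' + 1) (g0 ζ))⁻¹ :=
      hp.hasDerivAt.unique (hg0d ζ hζ)
    rw [hval] at hstrict
    have hne : (Df f (k' + 1) (g0 ζ))⁻¹ ≠ 0 :=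
      inv_ne_zero (Df_ne_zero lam hlam f hf _ _)
    have hmap := hstrict.map_nhds_eq hne
    rw [← hmap]
    exact Filter.image_mem_map (isOpen_ball.mem_nhds hζ)
  · rintro u ⟨ζ, hζ, rfl⟩
    rw [mem_ball, Complex.dist_eq]
    have h1 := hg0dist ζ hζ
    have h2 : ‖ζ - w (k' + 1)‖ < r := by
      rw [← Complex.dist_eq]; exact mem_ball.mp hζ
    have h3 : ‖g0 ζ - z‖ < 4 * r := by nlinarith
    linarith
  · rintro a ⟨ζa, hζa, rfl⟩ b ⟨ζb, hζb, rfl⟩ hab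
    rw [hg0inv ζa hζa, hg0inv ζb hζb] at hab
    rw [hab]
  · rw [hballeq]
    ext u
    constructor
    · rintro ⟨v, ⟨ζ, hζ, rfl⟩, rfl⟩
      rw [hg0inv ζ hζ]
      exact hζ
    · intro hu
      exact ⟨g0 u, ⟨u, hu, rfl⟩, hg0inv u hu⟩
end

section
/- Let λ0 ∈ ℂ \ {0} and f(z) = λ0·exp(z). There exists M > 0 such that for every y ≥ M and every square Q ∈ 𝒬 with Q ⊂ R(y) \ R(y+7), there is a subset S ⊂ Q such that f restricted to S is injective and f(S) is a square Q' ∈ 𝒬 with Q' ⊂ R(|λ0|·e^y/2) \ R(|λ0|·e^y·e^7). -/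
open Function Set

/-- The right half-plane `R(x) = {z : Re z > x}`. -/
def RHP (x : ℝ) : Set ℂ := {z : ℂ | x < z.re}

/-- A square of the grid `𝒬`. -/
def IsQSquare (Q : Set ℂ) : Prop :=
  ∃ j k : ℤ, Q = {z : ℂ | 2 * (k : ℝ) * Real.pi ≤ z.re ∧
    z.re < (2 * (k : ℝ) + 2) * Real.pi ∧
    2 * (j : ℝ) * Real.pi ≤ z.im ∧ z.im < (2 * (j : ℝ) + 2) * Real.pi}

set_option maxHeartbeats 1000000

/-- there is `M > 0` such that any square `Q ∈ 𝒬` with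
`Q ⊆ R(y) \ R(y+7)`, `y ≥ M`, contains a subset mapped injectively by `f` onto a
square `Q' ∈ 𝒬` with `Q' ⊆ R(|λ0|e^y/2) \ R(|λ0|e^y·e^7)`. -/
theorem stmt_11 (lam : ℂ) (hlam : lam ≠ 0) (f : ℂ → ℂ)
    (hf : ∀ z, f z = lam * Complex.exp z) :
    ∃ M : ℝ, 0 < M ∧ ∀ y : ℝ, M ≤ y → ∀ Q : Set ℂ, IsQSquare Q →
      Q ⊆ RHP y \ RHP (y + 7) →
      ∃ S : Set ℂ, S ⊆ Q ∧ InjOn f S ∧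
        ∃ Q' : Set ℂ, IsQSquare Q' ∧ f '' S = Q' ∧
          Q' ⊆ RHP (‖lam‖ * Real.exp y / 2) \
               RHP (‖lam‖ * Real.exp y * Real.exp 7) := by
  have hπ : (0:ℝ) < Real.pi := Real.pi_pos
  have hπ3 : (3:ℝ) < Real.pi := Real.pi_gt_three
  have hπ4 : Real.pi ≤ 4 := Real.pi_le_four
  have hE : (2.7182818283:ℝ) < Real.exp 1 := Real.exp_one_gt_d9
  set L := ‖lam‖ with hLdef
  have hL0 : 0 < L := norm_pos_iff.2 hlam
  refine ⟨1 + |Real.log L|, by positivity, ?_⟩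
  intro y hy Q hQsq hQsub
  obtain ⟨j, k, hQ⟩ := hQsq
  -- the key quantity A = L * exp y
  set A := L * Real.exp y with hAdef
  have hA0 : 0 < A := by positivity
  have hAe : Real.exp 1 ≤ A := by
    have h1 : (1:ℝ) ≤ Real.log L + y := by
      have h2 := neg_abs_le (Real.log L)
      linarith
    calc Real.exp 1 ≤ Real.exp (Real.log L + y) := Real.exp_le_exp.2 h1
      _ = L * Real.exp y := by rw [Real.exp_add, Real.exp_log hL0]
  have hA2 : (2:ℝ) ≤ A := by nlinarith
  -- sample points of Q give bounds on k
  have hz0 : ((2*(k:ℝ)*Real.pi : ℝ) + (2*(j:ℝ)*Real.pi : ℝ)*Complex.I : ℂ) ∈ Q := by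
    rw [hQ]; simp; constructor <;> nlinarith
  have hz1 : ((2*(k:ℝ)*Real.pi + Real.pi : ℝ) + (2*(j:ℝ)*Real.pi : ℝ)*Complex.I : ℂ) ∈ Q := by
    rw [hQ]; simp; refine ⟨by nlinarith, by nlinarith, by nlinarith⟩
  have hk1 : y < 2*(k:ℝ)*Real.pi := by
    have := (hQsub hz0).1
    simpa [RHP] using this
  have hk2 : 2*(k:ℝ)*Real.pi + Real.pi ≤ y + 7 := by
    have := (hQsub hz1).2
    simp [RHP] at this
    linarith
  set r := L * Real.exp (2*(k:ℝ)*Real.pi) with hrdef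
  have hr0 : 0 < r := by positivity
  have hAr : A < r := by
    have := Real.exp_lt_exp.2 hk1
    exact mul_lt_mul_of_pos_left this hL0
  have hrA4 : r ≤ A * Real.exp 4 := by
    have h1 : 2*(k:ℝ)*Real.pi ≤ y + 4 := by linarith
    have h2 : Real.exp (2*(k:ℝ)*Real.pi) ≤ Real.exp (y+4) := Real.exp_le_exp.2 h1
    calc r ≤ L * Real.exp (y+4) := mul_le_mul_of_nonneg_left h2 hL0.le
      _ = A * Real.exp 4 := by rw [Real.exp_add, hAdef]; ring
  -- choose m
  set m : ℤ := ⌈r / Real.pi⌉ with hmdef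
  have hm1 : r / Real.pi ≤ (m:ℝ) := Int.le_ceil _
  have hm2 : (m:ℝ) < r / Real.pi + 1 := Int.ceil_lt_add_one _
  have hmr : r ≤ (m:ℝ) * Real.pi := by
    rw [div_le_iff₀ hπ] at hm1; linarith
  have hmr2 : (m:ℝ) * Real.pi < r + Real.pi := by
    have h := mul_lt_mul_of_pos_right hm2 hπ
    rw [add_mul, one_mul, div_mul_cancel₀ _ hπ.ne'] at h
    exact h
  -- the target square Q'
  set Q' : Set ℂ := {z : ℂ | 2 * ((m:ℤ) : ℝ) * Real.pi ≤ z.re ∧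
    z.re < (2 * ((m:ℤ) : ℝ) + 2) * Real.pi ∧
    2 * (((0:ℤ)) : ℝ) * Real.pi ≤ z.im ∧ z.im < (2 * (((0:ℤ)) : ℝ) + 2) * Real.pi} with hQ'def
  have hQ'sq : IsQSquare Q' := ⟨0, m, rfl⟩
  -- injectivity of f on Q
  have hinj : InjOn f Q := by
    intro z hz w hw hzw
    rw [hf, hf] at hzw
    have h1 : Complex.exp z = Complex.exp w := mul_left_cancel₀ hlam hzw
    obtain ⟨n, hn⟩ := Complex.exp_eq_exp_iff_exists_int.1 h1
    rw [hQ] at hz hw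
    have him : z.im = w.im + (n:ℝ) * (2*Real.pi) := by
      rw [hn]; simp [Complex.add_im, Complex.mul_im, Complex.mul_re]
      try ring
    have h2π : (0:ℝ) < 2*Real.pi := by linarith
    have hn0 : n = 0 := by
      have hlt : (n:ℝ)*(2*Real.pi) < 1*(2*Real.pi) := by
        have a1 := hz.2.2.2; have a2 := hw.2.2.1
        rw [one_mul]; linarith
      have hgt : (-1:ℝ)*(2*Real.pi) < (n:ℝ)*(2*Real.pi) := by
        have a1 := hz.2.2.1; have a2 := hw.2.2.2
        nlinarith
      have h2 : (-1:ℝ) < (n:ℝ) := lt_of_mul_lt_mul_right hgt h2π.le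
      have h3 : (n:ℝ) < 1 := lt_of_mul_lt_mul_right hlt h2π.le
      have h2' : (-1:ℤ) < n := by exact_mod_cast h2
      have h3' : n < (1:ℤ) := by exact_mod_cast h3
      omega
    rw [hn, hn0]; simp
  -- f '' (Q ∩ f ⁻¹' Q') = Q'
  have himg : f '' (Q ∩ f ⁻¹' Q') = Q' := by
    apply Set.Subset.antisymm
    · rintro _ ⟨z, ⟨_, hz2⟩, rfl⟩
      exact hz2
    · intro w hw
      rw [hQ'def] at hw
      have hwQ' : w ∈ Q' := hw
      norm_num at hw
      obtain ⟨hw1, hw2, hw3, hw4⟩ := hw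
      have hmπ : 0 < (m:ℝ) * Real.pi := lt_of_lt_of_le hr0 hmr
      have hwre : 0 < w.re := by linarith
      have hw0 : w ≠ 0 := fun h => by rw [h] at hwre; simp at hwre
      have habs_lo : r ≤ ‖w‖ := by
        have h1 := Complex.re_le_norm w
        linarith
      have habs_hi : ‖w‖ < r * Real.exp (2*Real.pi) := by
        have h1 := Complex.norm_le_abs_re_add_abs_im w
        have h2 : |w.re| = w.re := abs_of_pos hwre
        have h3 : |w.im| = w.im := abs_of_nonneg (by linarith)
        have h4 : ‖w‖ < 2*r + 6*Real.pi := by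
          rw [h2, h3] at h1; nlinarith
        have h5 : Real.exp 6 ≤ Real.exp (2*Real.pi) := Real.exp_le_exp.2 (by nlinarith)
        have h6 : Real.exp 6 = Real.exp 1 ^ 6 := by
          rw [← Real.exp_nat_mul]; norm_num
        have hE2 : (7:ℝ) ≤ Real.exp 1 ^ 2 := by nlinarith
        have hE6 : (343:ℝ) ≤ Real.exp 1 ^ 6 := by
          calc (343:ℝ) = 7^3 := by norm_num
            _ ≤ (Real.exp 1 ^ 2)^3 := pow_le_pow_left₀ (by norm_num) hE2 3
            _ = Real.exp 1 ^ 6 := by ring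
        have h7 : (26:ℝ) < Real.exp (2*Real.pi) := by linarith
        have h8 : 2*r + 6*Real.pi ≤ 26 * r := by nlinarith
        nlinarith [hr0, h4, h7, h8]
      set t := w / lam with htdef
      have ht : t ≠ 0 := div_ne_zero hw0 hlam
      have habs_t : ‖t‖ = ‖w‖ / L := norm_div _ _
      have ht0 : 0 < ‖t‖ := norm_pos_iff.2 ht
      have hlog_lo : 2*(k:ℝ)*Real.pi ≤ Real.log (‖t‖) := by
        rw [Real.le_log_iff_exp_le ht0, habs_t, le_div_iff₀ hL0]
        calc Real.exp (2*(k:ℝ)*Real.pi) * L = r := by rw [hrdef]; ring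
          _ ≤ ‖w‖ := habs_lo
      have hlog_hi : Real.log (‖t‖) < 2*(k:ℝ)*Real.pi + 2*Real.pi := by
        rw [Real.log_lt_iff_lt_exp ht0, habs_t, div_lt_iff₀ hL0]
        calc ‖w‖ < r * Real.exp (2*Real.pi) := habs_hi
          _ = Real.exp (2*(k:ℝ)*Real.pi + 2*Real.pi) * L := by
              rw [Real.exp_add, hrdef]; ring
      set n : ℤ := ⌈(2*(j:ℝ)*Real.pi - (Complex.log t).im) / (2*Real.pi)⌉ with hndef
      have hn1 : (2*(j:ℝ)*Real.pi - (Complex.log t).im) / (2*Real.pi) ≤ (n:ℝ) := Int.le_ceil _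
      have hn2 : (n:ℝ) < (2*(j:ℝ)*Real.pi - (Complex.log t).im) / (2*Real.pi) + 1 :=
        Int.ceil_lt_add_one _
      have h2π : (0:ℝ) < 2*Real.pi := by linarith
      have hn1' : 2*(j:ℝ)*Real.pi - (Complex.log t).im ≤ (n:ℝ) * (2*Real.pi) := by
        rw [div_le_iff₀ h2π] at hn1; linarith
      have hn2' : (n:ℝ) * (2*Real.pi) < 2*(j:ℝ)*Real.pi - (Complex.log t).im + 2*Real.pi := by
        have h := mul_lt_mul_of_pos_right hn2 h2π
        rw [add_mul, one_mul, div_mul_cancel₀ _ h2π.ne'] at h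
        exact h
      set z : ℂ := Complex.log t + (n:ℂ) * (2*(Real.pi:ℂ)*Complex.I) with hzdef
      have hzre : z.re = Real.log (‖t‖) := by
        rw [hzdef]
        simp [Complex.add_re, Complex.mul_re, Complex.log_re]
      have hzim : z.im = (Complex.log t).im + (n:ℝ) * (2*Real.pi) := by
        rw [hzdef]
        simp [Complex.add_im, Complex.mul_im]
        try ring
      have hfz : f z = w := by
        rw [hf, hzdef, Complex.exp_add, Complex.exp_log ht,
          Complex.exp_int_mul_two_pi_mul_I n, mul_one, htdef,
          mul_div_cancel₀ _ hlam]
      have hzQ : z ∈ Q := by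
        rw [hQ]
        refine ⟨?_, ?_, ?_, ?_⟩
        · rw [hzre]; exact hlog_lo
        · rw [hzre]; nlinarith
        · rw [hzim]; linarith
        · rw [hzim]; linarith
      exact ⟨z, ⟨hzQ, by rw [Set.mem_preimage, hfz]; exact hwQ'⟩, hfz⟩
  refine ⟨Q ∩ f ⁻¹' Q', Set.inter_subset_left, hinj.mono Set.inter_subset_left,
    Q', hQ'sq, himg, ?_⟩
  -- Q' is in the right half-plane region
  intro w hw
  rw [hQ'def] at hw
  obtain ⟨hw1, hw2, _, _⟩ := hw
  constructor
  · show A / 2 < w.re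
    linarith
  · show ¬ (A * Real.exp 7 < w.re)
    push_neg
    have h6 : Real.exp 7 = Real.exp 1 ^ 7 := by rw [← Real.exp_nat_mul]; norm_num
    have h7 : Real.exp 4 = Real.exp 1 ^ 4 := by rw [← Real.exp_nat_mul]; norm_num
    have hE3 : (19:ℝ) ≤ Real.exp 1 ^ 3 := by
      calc (19:ℝ) ≤ 2.7^3 := by norm_num
        _ ≤ Real.exp 1 ^ 3 := pow_le_pow_left₀ (by norm_num) (by linarith) 3
    have hE4 : (1:ℝ) ≤ Real.exp 1 ^ 4 := by nlinarith [hE3, hE]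
    have key : 2 * Real.exp 4 + 8 ≤ Real.exp 7 := by
      rw [h6, h7]
      calc 2 * Real.exp 1 ^ 4 + 8 ≤ 19 * Real.exp 1 ^ 4 := by nlinarith
        _ ≤ Real.exp 1 ^ 3 * Real.exp 1 ^ 4 := by nlinarith
        _ = Real.exp 1 ^ 7 := by ring
    -- w.re < (2m+2)π < 2r + 4π ≤ 2 A e^4 + 4π ≤ A e^7
    have h8 : w.re < 2*r + 4*Real.pi := by nlinarith
    nlinarith [Real.exp_pos 4]
end

section
/- Let γ, β ∈ (0, 1/10), let λ1, λ2 ∈ ℂ \ {0} satisfy |log(λ1/λ2)| < β, and set g_j(w) = λ_j·exp(w) for j = 1, 2. Suppose y, z, z' ∈ ℂ with z ≠ 0, g_1(z') = z, and |(y − z)/z| < γ. Then there exists y' ∈ ℂ with g_2(y') = y and |y' − z' − (y − z)/z| < 3γ² + β. -/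
/-- for `γ, β ∈ (0, 1/10)`, `|log(λ1/λ2)| < β`,
`g_j(w) = λ_j·exp(w)`, if `g1(z') = z`, `z ≠ 0` and `|(y−z)/z| < γ`, then some
preimage `y'` of `y` under `g2` satisfies `|y' − z' − (y−z)/z| < 3γ² + β`. -/
theorem stmt_18 (γ β : ℝ) (hγ0 : 0 < γ) (hγ1 : γ < 1/10)
    (hβ0 : 0 < β) (hβ1 : β < 1/10)
    (lam1 lam2 : ℂ) (h1 : lam1 ≠ 0) (h2 : lam2 ≠ 0)
    (hlog : ‖Complex.log (lam1 / lam2)‖ < β)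
    (g1 g2 : ℂ → ℂ)
    (hg1 : ∀ w, g1 w = lam1 * Complex.exp w)
    (hg2 : ∀ w, g2 w = lam2 * Complex.exp w)
    (y z z' : ℂ) (hz : z ≠ 0) (hz' : g1 z' = z)
    (hyz : ‖(y - z) / z‖ < γ) :
    ∃ y' : ℂ, g2 y' = y ∧
      ‖y' - z' - (y - z) / z‖ < 3 * γ ^ 2 + β := by
  set u : ℂ := (y - z) / z with hu
  have hu1 : ‖u‖ < 1 := lt_trans (by simpa using hyz) (by linarith)
  have h1u : (1 : ℂ) + u ≠ 0 := by
    intro h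
    have : ‖(1 : ℂ)‖ = ‖u‖ := by
      have : u = -1 := by linear_combination h
      simp [this]
    simp at this; linarith
  refine ⟨z' + Complex.log (1 + u) + Complex.log (lam1 / lam2), ?_, ?_⟩
  · rw [hg2, Complex.exp_add, Complex.exp_add, Complex.exp_log h1u,
      Complex.exp_log (div_ne_zero h1 h2)]
    have hz'' : lam1 * Complex.exp z' = z := by rw [← hg1]; exact hz'
    have h1u' : (1 : ℂ) + u = y / z := by
      rw [hu, add_div' _ _ _ hz]; congr 1; ring
    rw [h1u']
    have he : Complex.exp z' = z / lam1 := by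
      field_simp at hz'' ⊢; linear_combination hz''
    rw [he]; field_simp
  · have key : ‖Complex.log (1 + u) - u‖ ≤ ‖u‖ ^ 2 * (1 - ‖u‖)⁻¹ / 2 :=
      Complex.norm_log_one_add_sub_self_le hu1
    have hnu : ‖u‖ < γ := by simpa using hyz
    have hb : ‖u‖ ^ 2 * (1 - ‖u‖)⁻¹ / 2 < 3 * γ ^ 2 := by
      have h0 : (0:ℝ) ≤ ‖u‖ := norm_nonneg u
      have hlt : (1 - ‖u‖)⁻¹ ≤ 2 := by
        rw [inv_le_comm₀ (by linarith) (by norm_num)]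
        linarith
      nlinarith [sq_nonneg ‖u‖]
    calc ‖z' + Complex.log (1 + u) + Complex.log (lam1 / lam2) - z' - u‖
        = ‖(Complex.log (1 + u) - u) + Complex.log (lam1 / lam2)‖ := by congr 1; ring
      _ ≤ ‖Complex.log (1 + u) - u‖ + ‖Complex.log (lam1 / lam2)‖ := norm_add_le _ _
      _ < 3 * γ ^ 2 + β := by
          have := key.trans_lt hb
          exact add_lt_add this hlog
end
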